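/- arXiv:1601.05006 — 2 statements merged into one kernel-verified Lean document; each statement's English description precedes it below -/
import Mathlib

section
/- For the Poisson bracket {x_i,x_j} = x_i x_j (i<j) and v_j = Σ_{m≤j} a_m x_m: {J_k, v_j} = J_k v_j if j ≤ 2k, and {J_k, v_j} = J_k v_{2k} if j > 2k, where J_k = (x_1 x_3 ⋯ x_{2k−1})/(x_2 x_4 ⋯ x_{2k}). -/
open Finset Real

/-- partial derivative of `f` in the `i`-th coordinate direction -/
noncomputable def pd {n : ℕ} (i : Fin n) (f : (Fin n → ℝ) → ℝ) (x : Fin n → ℝ) : ℝ :=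
  fderiv ℝ f x (Pi.single i 1)

/-- the quadratic Poisson bracket `{x_i,x_j} = x_i x_j` for `i < j` -/
noncomputable def pb {n : ℕ} (f g : (Fin n → ℝ) → ℝ) (x : Fin n → ℝ) : ℝ :=
  ∑ i : Fin n, ∑ j : Fin n,
    if i < j then x i * x j * (pd i f x * pd j g x - pd j f x * pd i g x) else 0

/-- `v a j x = a_1 x_1 + ⋯ + a_j x_j` (sum of the first `j` terms, 1-based). -/
noncomputable def v {n : ℕ} (a : Fin n → ℝ) (j : ℕ) (x : Fin n → ℝ) : ℝ :=
  ∑ k : Fin n, if (k : ℕ) < j then a k * x k else 0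

/-- right-hand side of the generalized Lotka–Volterra system -/
noncomputable def rhs {n : ℕ} (a : Fin n → ℝ) (x : Fin n → ℝ) (i : Fin n) : ℝ :=
  x i * ((∑ j : Fin n, if i < j then a j * x j else 0)
        - ∑ j : Fin n, if j < i then a j * x j else 0)

/-- `J k = (x_1 x_3 ⋯ x_{2k-1})/(x_2 x_4 ⋯ x_{2k})` (1-based indexing). -/
noncomputable def J {n : ℕ} (k : ℕ) (x : Fin n → ℝ) : ℝ :=
  ∏ m : Fin n, if (m : ℕ) < 2 * k then
    (if (m : ℕ) % 2 = 0 then x m else (x m)⁻¹) else 1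

/-- `I k = (x_{2k+2} x_{2k+4} ⋯ x_n)/(x_{2k+1} x_{2k+3} ⋯ x_{n-1})` (1-based, n even). -/
noncomputable def Ifun {n : ℕ} (k : ℕ) (x : Fin n → ℝ) : ℝ :=
  ∏ m : Fin n, if 2 * k ≤ (m : ℕ) then
    (if (m : ℕ) % 2 = 1 then x m else (x m)⁻¹) else 1

/-! ### Auxiliary lemmas -/

lemma pd_v {n : ℕ} (a : Fin n → ℝ) (j : ℕ) (x : Fin n → ℝ) (i : Fin n) :
    pd i (v a j) x = if (i : ℕ) < j then a i else 0 := by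
  classical
  have h : HasFDerivAt (v a j)
      (∑ m : Fin n, (if (m : ℕ) < j then a m else 0) •
        (ContinuousLinearMap.proj m : (Fin n → ℝ) →L[ℝ] ℝ)) x := by
    have hterm : ∀ m : Fin n, m ∈ Finset.univ → HasFDerivAt
        (fun y : Fin n → ℝ => if (m : ℕ) < j then a m * y m else 0)
        ((if (m : ℕ) < j then a m else 0) •
          (ContinuousLinearMap.proj m : (Fin n → ℝ) →L[ℝ] ℝ)) x := by
      intro m _
      by_cases hm : (m : ℕ) < j
      · simp only [hm, if_true]
        exact ((ContinuousLinearMap.proj m :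
          (Fin n → ℝ) →L[ℝ] ℝ).hasFDerivAt (x := x)).const_mul (a m)
      · simp only [hm, if_false, zero_smul]
        exact hasFDerivAt_const 0 x
    exact HasFDerivAt.fun_sum hterm
  rw [pd, h.fderiv, ContinuousLinearMap.sum_apply, Finset.sum_eq_single i]
  · split_ifs <;> simp
  · intro b _ hb
    split_ifs <;> simp [Pi.single_apply, hb]
  · simp

noncomputable def Jfac {n : ℕ} (k : ℕ) (m : Fin n) (y : Fin n → ℝ) : ℝ :=
  if (m : ℕ) < 2 * k then (if (m : ℕ) % 2 = 0 then y m else (y m)⁻¹) else 1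

lemma Jfac_ne_zero {n : ℕ} (k : ℕ) (m : Fin n) (x : Fin n → ℝ) (hx : ∀ i, x i ≠ 0) :
    Jfac k m x ≠ 0 := by
  unfold Jfac
  split_ifs
  · exact hx m
  · exact inv_ne_zero (hx m)
  · exact one_ne_zero

lemma hasFDerivAt_Jfac {n : ℕ} (k : ℕ) (m : Fin n) (x : Fin n → ℝ) (hx : ∀ i, x i ≠ 0) :
    HasFDerivAt (Jfac k m)
      ((if (m : ℕ) < 2 * k then
          (if (m : ℕ) % 2 = 0 then 1 else -((x m)⁻¹ * (x m)⁻¹)) else 0) •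
        (ContinuousLinearMap.proj m : (Fin n → ℝ) →L[ℝ] ℝ)) x := by
  unfold Jfac
  by_cases h1 : (m : ℕ) < 2 * k
  · by_cases h2 : (m : ℕ) % 2 = 0
    · simp only [h1, h2, if_true, one_smul]
      exact (ContinuousLinearMap.proj m :
        (Fin n → ℝ) →L[ℝ] ℝ).hasFDerivAt (x := x)
    · simp only [h1, h2, if_true, if_false]
      have hinv := (hasFDerivAt_inv (hx m)).comp x
        ((ContinuousLinearMap.proj m : (Fin n → ℝ) →L[ℝ] ℝ).hasFDerivAt (x := x))
      refine hinv.congr_fderiv ?_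
      ext y
      simp [mul_comm, pow_two, mul_inv]
  · simp only [h1, if_false, zero_smul]
    exact hasFDerivAt_const 1 x

lemma pd_J {n : ℕ} (k : ℕ) (x : Fin n → ℝ) (hx : ∀ i, x i ≠ 0) (i : Fin n) :
    pd i (J k) x =
      (if (i : ℕ) < 2 * k then (if (i : ℕ) % 2 = 0 then (x i)⁻¹ else -(x i)⁻¹) else 0)
        * J k x := by
  classical
  have h : HasFDerivAt (fun y => ∏ m : Fin n, Jfac k m y)
      (∑ m : Fin n, (∏ l ∈ Finset.univ.erase m, Jfac k l x) •
        ((if (m : ℕ) < 2 * k then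
            (if (m : ℕ) % 2 = 0 then 1 else -((x m)⁻¹ * (x m)⁻¹)) else 0) •
          (ContinuousLinearMap.proj m : (Fin n → ℝ) →L[ℝ] ℝ))) x :=
    HasFDerivAt.finset_prod (fun m _ => hasFDerivAt_Jfac k m x hx)
  have h2 : fderiv ℝ (J k) x =
      (∑ m : Fin n, (∏ l ∈ Finset.univ.erase m, Jfac k l x) •
        ((if (m : ℕ) < 2 * k then
            (if (m : ℕ) % 2 = 0 then 1 else -((x m)⁻¹ * (x m)⁻¹)) else 0) •
          (ContinuousLinearMap.proj m : (Fin n → ℝ) →L[ℝ] ℝ))) := h.fderiv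
  rw [pd, h2, ContinuousLinearMap.sum_apply, Finset.sum_eq_single i]
  · have herase : (∏ l ∈ Finset.univ.erase i, Jfac k l x) = J k x / Jfac k i x := by
      rw [eq_div_iff (Jfac_ne_zero k i x hx)]
      rw [Finset.prod_erase_mul _ _ (Finset.mem_univ i)]
      rfl
    rw [herase]
    have hxi := hx i
    by_cases h1 : (i : ℕ) < 2 * k
    · by_cases h2' : (i : ℕ) % 2 = 0
      · have hg : Jfac k i x = x i := by unfold Jfac; simp [h1, h2']
        simp only [h1, h2', if_true, hg, ContinuousLinearMap.smul_apply,
          ContinuousLinearMap.proj_apply, Pi.single_eq_same, smul_eq_mul]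
        field_simp
      · have hg : Jfac k i x = (x i)⁻¹ := by unfold Jfac; simp [h1, h2']
        simp only [h1, h2', if_true, if_false, hg, ContinuousLinearMap.smul_apply,
          ContinuousLinearMap.proj_apply, Pi.single_eq_same, smul_eq_mul]
        field_simp
    · simp [h1]
  · intro b _ hb
    split_ifs <;> simp [Pi.single_apply, hb]
  · simp

noncomputable def E (t : ℕ) : ℝ := if t % 2 = 0 then 1 else -1

lemma sum_E (t : ℕ) : ∑ s ∈ Finset.range t, E s = if t % 2 = 1 then 1 else 0 := by
  induction t with
  | zero => simp
  | succ t ih =>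
    rw [Finset.sum_range_succ, ih]
    unfold E
    rcases Nat.even_or_odd t with h | h
    · have h1 : t % 2 = 0 := Nat.even_iff.mp h
      have h2 : (t + 1) % 2 = 1 := by omega
      have h3 : ¬ t % 2 = 1 := by omega
      simp [h1, h2, h3]
    · have h1 : t % 2 = 1 := Nat.odd_iff.mp h
      have h2 : ¬ (t + 1) % 2 = 1 := by omega
      have h3 : ¬ t % 2 = 0 := by omega
      simp [h1, h2, h3]

noncomputable def eps (k t : ℕ) : ℝ := if t < 2 * k then E t else 0

lemma sum_range_eps (n k t : ℕ) (h : t ≤ n) (h2k : 2 * k ≤ n) :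
    ∑ s ∈ Finset.range n, (if s < t then eps k s else 0) =
      if (min t (2 * k)) % 2 = 1 then 1 else 0 := by
  have step : ∀ s, (if s < t then eps k s else 0)
      = (if s ∈ Finset.range (min t (2 * k)) then E s else 0) := by
    intro s
    unfold eps
    by_cases h1 : s < t <;> by_cases h2 : s < 2 * k <;>
      simp [h1, h2, Finset.mem_range, lt_min_iff] <;> omega
  simp_rw [step]
  rw [Finset.sum_ite_mem]
  have hint : Finset.range n ∩ Finset.range (min t (2 * k)) = Finset.range (min t (2 * k)) := by
    apply Finset.inter_eq_right.mpr
    apply Finset.range_subset_range.mpr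
    omega
  rw [hint, sum_E]

lemma sum_fin_eps_lt {n : ℕ} (k t : ℕ) (h : t ≤ n) (h2k : 2 * k ≤ n) :
    ∑ i : Fin n, (if (i : ℕ) < t then eps k i else 0) =
      if (min t (2 * k)) % 2 = 1 then 1 else 0 := by
  rw [Fin.sum_univ_eq_sum_range (fun s => if s < t then eps k s else 0)]
  exact sum_range_eps n k t h h2k

lemma sum_fin_eps_gt {n : ℕ} (k i : ℕ) (h2k : 2 * k ≤ n) (hi : i < n) :
    ∑ m : Fin n, (if i < (m : ℕ) then eps k m else 0) =
      -(if (min (i + 1) (2 * k)) % 2 = 1 then 1 else 0) := by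
  have hsplit : ∀ m : Fin n, (if i < (m : ℕ) then eps k m else 0)
      = eps k m - (if (m : ℕ) < i + 1 then eps k m else 0) := by
    intro m
    by_cases h1 : i < (m : ℕ)
    · have h2 : ¬ (m : ℕ) < i + 1 := by omega
      simp [h1, h2]
    · have h2 : (m : ℕ) < i + 1 := by omega
      simp [h1, h2]
  simp_rw [hsplit]
  rw [Finset.sum_sub_distrib]
  have htot : ∑ m : Fin n, eps k m = 0 := by
    have := sum_fin_eps_lt (n := n) k (2 * k) h2k h2k
    have heq : ∀ m : Fin n, (if (m : ℕ) < 2 * k then eps k m else 0) = eps k m := by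
      intro m; unfold eps; split_ifs <;> simp_all
    rw [Finset.sum_congr rfl (fun m _ => heq m)] at this
    rw [this]
    simp [Nat.mul_mod_right]
  rw [htot, sum_fin_eps_lt (n := n) k (i + 1) (by omega) h2k]
  ring


/-- `{J_k, v_j} = J_k v_j` for `j ≤ 2k` and `{J_k, v_j} = J_k v_{2k}`
for `j > 2k`. -/
theorem J_v_bracket (n : ℕ) (a : Fin n → ℝ) (k : ℕ)
    (hk1 : 1 ≤ k) (hk2 : k ≤ n / 2) (j : ℕ) (hj : j ≤ n)
    (x : Fin n → ℝ) (hx : ∀ i, x i ≠ 0) :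
    pb (J k) (v a j) x =
      if j ≤ 2 * k then J k x * v a j x else J k x * v a (2 * k) x := by
  classical
  have h2k : 2 * k ≤ n := by omega
  have key : pb (J k) (v a j) x = ∑ i : Fin n, ∑ m : Fin n,
      (J k x * ((if (i : ℕ) < (m : ℕ) then eps k (i : ℕ) else 0) *
                  (if (m : ℕ) < j then a m * x m else 0)
              - (if (i : ℕ) < (m : ℕ) then eps k (m : ℕ) else 0) *
                  (if (i : ℕ) < j then a i * x i else 0))) := by
    unfold pb
    refine Finset.sum_congr rfl fun i _ => Finset.sum_congr rfl fun m _ => ?_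
    rw [pd_J k x hx i, pd_J k x hx m, pd_v a j x i, pd_v a j x m]
    simp only [Fin.lt_def]
    unfold eps E
    have hxi := hx i
    have hxm := hx m
    split_ifs <;> first
      | omega
      | (field_simp <;> ring)
      | ring
      | simp
  rw [key]
  have e0 : ∀ i m : Fin n,
      (J k x * ((if (i : ℕ) < (m : ℕ) then eps k (i : ℕ) else 0) *
                  (if (m : ℕ) < j then a m * x m else 0)
              - (if (i : ℕ) < (m : ℕ) then eps k (m : ℕ) else 0) *
                  (if (i : ℕ) < j then a i * x i else 0)))
      = J k x * ((if (i : ℕ) < (m : ℕ) then eps k (i : ℕ) else 0) *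
                  (if (m : ℕ) < j then a m * x m else 0))
      - J k x * ((if (i : ℕ) < (m : ℕ) then eps k (m : ℕ) else 0) *
                  (if (i : ℕ) < j then a i * x i else 0)) := by
    intro i m; ring
  simp_rw [e0, Finset.sum_sub_distrib]
  have e1 : (∑ i : Fin n, ∑ m : Fin n,
      J k x * ((if (i : ℕ) < (m : ℕ) then eps k (i : ℕ) else 0) *
        (if (m : ℕ) < j then a m * x m else 0)))
      = ∑ m : Fin n, J k x * ((if (min (m : ℕ) (2 * k)) % 2 = 1 then 1 else 0) *
          (if (m : ℕ) < j then a m * x m else 0)) := by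
    rw [Finset.sum_comm]
    refine Finset.sum_congr rfl fun m _ => ?_
    rw [← Finset.mul_sum, ← Finset.sum_mul,
      sum_fin_eps_lt k (m : ℕ) (le_of_lt m.isLt) h2k]
  have e2 : (∑ i : Fin n, ∑ m : Fin n,
      J k x * ((if (i : ℕ) < (m : ℕ) then eps k (m : ℕ) else 0) *
        (if (i : ℕ) < j then a i * x i else 0)))
      = ∑ i : Fin n, J k x * ((-(if (min ((i : ℕ) + 1) (2 * k)) % 2 = 1 then 1 else 0)) *
          (if (i : ℕ) < j then a i * x i else 0)) := by
    refine Finset.sum_congr rfl fun i _ => ?_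
    rw [← Finset.mul_sum, ← Finset.sum_mul,
      sum_fin_eps_gt k (i : ℕ) h2k i.isLt]
  rw [e1, e2, ← Finset.sum_sub_distrib]
  have e3 : ∀ m : Fin n,
      (J k x * ((if (min (m : ℕ) (2 * k)) % 2 = 1 then (1:ℝ) else 0) *
          (if (m : ℕ) < j then a m * x m else 0))
      - J k x * ((-(if (min ((m : ℕ) + 1) (2 * k)) % 2 = 1 then (1:ℝ) else 0)) *
          (if (m : ℕ) < j then a m * x m else 0)))
      = J k x * ((if (m : ℕ) < 2 * k then (1:ℝ) else 0) *
          (if (m : ℕ) < j then a m * x m else 0)) := by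
    intro m
    have hc : ((if (min (m : ℕ) (2 * k)) % 2 = 1 then (1:ℝ) else 0)
        - (-(if (min ((m : ℕ) + 1) (2 * k)) % 2 = 1 then (1:ℝ) else 0)))
        = (if (m : ℕ) < 2 * k then (1:ℝ) else 0) := by
      split_ifs <;> first | omega | norm_num
    calc J k x * ((if (min (m : ℕ) (2 * k)) % 2 = 1 then (1:ℝ) else 0) *
          (if (m : ℕ) < j then a m * x m else 0))
      - J k x * ((-(if (min ((m : ℕ) + 1) (2 * k)) % 2 = 1 then (1:ℝ) else 0)) *
          (if (m : ℕ) < j then a m * x m else 0))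
        = J k x * (((if (min (m : ℕ) (2 * k)) % 2 = 1 then (1:ℝ) else 0)
            - (-(if (min ((m : ℕ) + 1) (2 * k)) % 2 = 1 then (1:ℝ) else 0))) *
          (if (m : ℕ) < j then a m * x m else 0)) := by ring
      _ = _ := by rw [hc]
  simp_rw [e3]
  unfold v
  by_cases hcase : j ≤ 2 * k
  · rw [if_pos hcase, Finset.mul_sum]
    refine Finset.sum_congr rfl fun m _ => ?_
    by_cases hm : (m : ℕ) < j
    · have : (m : ℕ) < 2 * k := by omega
      simp [hm, this]
    · simp [hm]
  · rw [if_neg hcase, Finset.mul_sum]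
    refine Finset.sum_congr rfl fun m _ => ?_
    by_cases hm : (m : ℕ) < 2 * k
    · have : (m : ℕ) < j := by omega
      simp [hm, this]
    · simp [hm]
end

section
/- Let x⁰ ∈ R^n with h₀ := Σ a_i x_i⁰ = 0 and v_i⁰ := Σ_{k≤i} a_k x_k⁰. Then x_i(t) = x_i⁰ / [(1 + t v_{i−1}⁰)(1 + t v_i⁰)] solves ẋ_i = x_i(Σ_{j>i} a_j x_j − Σ_{j<i} a_j x_j) with x(0) = x⁰, on any interval containing 0 where the denominators are nonzero. -/
open Finset Real

/-- explicit solution of the generalized Lotka–Volterra system when `h₀ = 0` -/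
noncomputable def sol0 {n : ℕ} (a : Fin n → ℝ) (x0 : Fin n → ℝ) (t : ℝ) (i : Fin n) : ℝ :=
  x0 i / ((1 + t * v a (i : ℕ) x0) * (1 + t * v a ((i : ℕ) + 1) x0))

lemma sum_ite_succ {n : ℕ} (F : Fin n → ℝ) (i : ℕ) (hi : i < n) :
    (∑ j : Fin n, if (j : ℕ) < i + 1 then F j else 0)
      = (∑ j : Fin n, if (j : ℕ) < i then F j else 0) + F ⟨i, hi⟩ := by
  have h : ∀ j : Fin n, (if (j : ℕ) < i + 1 then F j else 0)
      = (if (j : ℕ) < i then F j else 0) + (if j = ⟨i, hi⟩ then F j else 0) := by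
    intro j
    rcases lt_trichotomy (j : ℕ) i with h | h | h
    · simp [h, Nat.lt_succ_of_lt h, Fin.ext_iff, Nat.ne_of_lt h]
    · simp [h, Fin.ext_iff, Nat.lt_irrefl]
    · simp [Fin.ext_iff, Nat.not_lt.mpr (le_of_lt h), Nat.not_lt.mpr (Nat.succ_le_of_lt h),
        (Nat.ne_of_lt h).symm]
  rw [Finset.sum_congr rfl (fun j _ => h j), Finset.sum_add_distrib,
    Finset.sum_ite_eq' Finset.univ (⟨i, hi⟩ : Fin n) F]
  simp

lemma v_zero' {n : ℕ} (a : Fin n → ℝ) (x0 : Fin n → ℝ) : v a 0 x0 = 0 := by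
  simp [v]

lemma v_succ' {n : ℕ} (a : Fin n → ℝ) (x0 : Fin n → ℝ) (i : ℕ) (hi : i < n) :
    v a (i + 1) x0 = v a i x0 + a ⟨i, hi⟩ * x0 ⟨i, hi⟩ :=
  sum_ite_succ (fun k => a k * x0 k) i hi

lemma tel {n : ℕ} (a : Fin n → ℝ) (x0 : Fin n → ℝ) (t : ℝ)
    (ht : ∀ j : ℕ, j ≤ n → 1 + t * v a j x0 ≠ 0) :
    ∀ i ≤ n, (∑ j : Fin n, if (j : ℕ) < i then a j * sol0 a x0 t j else 0)
      = v a i x0 / (1 + t * v a i x0) := by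
  intro i
  induction i with
  | zero => intro _; simp [v_zero']
  | succ i ih =>
    intro hi
    have hin : i < n := hi
    rw [sum_ite_succ (fun j => a j * sol0 a x0 t j) i hin, ih (le_of_lt hin)]
    have hb := ht i (le_of_lt hin)
    have hc := ht (i + 1) hi
    have hv := v_succ' a x0 i hin
    have hd : a ⟨i, hin⟩ * sol0 a x0 t ⟨i, hin⟩
        = (v a (i + 1) x0 - v a i x0)
          / ((1 + t * v a i x0) * (1 + t * v a (i + 1) x0)) := by
      show a ⟨i, hin⟩ * (x0 ⟨i, hin⟩ / ((1 + t * v a i x0) * (1 + t * v a (i + 1) x0))) = _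
      rw [hv]
      ring
    rw [hd]
    rw [div_add_div _ _ hb (mul_ne_zero hb hc), div_eq_div_iff (mul_ne_zero hb (mul_ne_zero hb hc)) hc]
    ring

/-- the explicit formula solves the generalized Lotka–Volterra
system with initial condition `x⁰` when `h₀ = 0`, at every time where the
denominators are nonzero. -/
theorem explicit_solution_zero_h0 (n : ℕ) (a : Fin n → ℝ) (x0 : Fin n → ℝ)
    (hh0 : (∑ m, a m * x0 m) = 0) :
    (∀ i, sol0 a x0 0 i = x0 i) ∧
    (∀ t : ℝ,
      (∀ j : ℕ, j ≤ n → 1 + t * v a j x0 ≠ 0) →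
      ∀ i : Fin n, HasDerivAt (fun s => sol0 a x0 s i) (rhs a (sol0 a x0 t) i) t) := by
  constructor
  · intro i; simp [sol0]
  · intro t ht i
    have hb : (1 + t * v a (i : ℕ) x0) ≠ 0 := ht (i : ℕ) (le_of_lt i.isLt)
    have hc : (1 + t * v a ((i : ℕ) + 1) x0) ≠ 0 := ht ((i : ℕ) + 1) i.isLt
    set b := v a (i : ℕ) x0 with hbdef
    set c := v a ((i : ℕ) + 1) x0 with hcdef
    -- value of the whole sum
    have hvn : v a n x0 = 0 := by
      rw [← hh0, v]
      exact Finset.sum_congr rfl (fun k _ => by simp [k.isLt])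
    have htel := tel a x0 t ht
    have hall : (∑ j : Fin n, a j * sol0 a x0 t j) = 0 := by
      have h := htel n le_rfl
      rw [hvn] at h
      simpa [Fin.is_lt] using h
    have hS1 : (∑ j : Fin n, if j < i then a j * sol0 a x0 t j else 0)
        = b / (1 + t * b) := by
      simp only [Fin.lt_def]
      exact htel (i : ℕ) (le_of_lt i.isLt)
    have hS2 : (∑ j : Fin n, if i < j then a j * sol0 a x0 t j else 0)
        = -(c / (1 + t * c)) := by
      have h : ∀ j : Fin n, (if i < j then a j * sol0 a x0 t j else 0)
          = a j * sol0 a x0 t j - (if (j : ℕ) < (i : ℕ) + 1 then a j * sol0 a x0 t j else 0) := by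
        intro j
        simp only [Fin.lt_def]
        rcases lt_or_ge (i : ℕ) (j : ℕ) with h | h
        · rw [if_pos h, if_neg (by omega)]; ring
        · rw [if_neg (by omega), if_pos (by omega)]; ring
      rw [Finset.sum_congr rfl (fun j _ => h j), Finset.sum_sub_distrib, hall,
        htel ((i : ℕ) + 1) i.isLt]
      ring
    have hrhs : rhs a (sol0 a x0 t) i
        = (x0 i / ((1 + t * b) * (1 + t * c))) * (-(c / (1 + t * c)) - b / (1 + t * b)) := by
      rw [rhs, hS1, hS2]; rfl
    have h1 : HasDerivAt (fun s : ℝ => 1 + s * b) b t := by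
      simpa using ((hasDerivAt_id t).mul_const b).const_add 1
    have h2 : HasDerivAt (fun s : ℝ => 1 + s * c) c t := by
      simpa using ((hasDerivAt_id t).mul_const c).const_add 1
    have hg : HasDerivAt (fun s : ℝ => (1 + s * b) * (1 + s * c))
        (b * (1 + t * c) + (1 + t * b) * c) t := h1.mul h2
    have hne : (1 + t * b) * (1 + t * c) ≠ 0 := mul_ne_zero hb hc
    have hder : HasDerivAt (fun s : ℝ => x0 i / ((1 + s * b) * (1 + s * c)))
        ((0 * ((1 + t * b) * (1 + t * c)) - x0 i * (b * (1 + t * c) + (1 + t * b) * c))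
          / ((1 + t * b) * (1 + t * c)) ^ 2) t :=
      (hasDerivAt_const t (x0 i)).div hg hne
    have heq : (fun s : ℝ => sol0 a x0 s i) = fun s : ℝ => x0 i / ((1 + s * b) * (1 + s * c)) := by
      funext s; rfl
    rw [heq, hrhs]
    convert hder using 1
    field_simp
    ring
end
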